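/- Let α = 3 - 2√2. For n ≥ 1, with r(p_0,q_n) = n - 1 - √2 + 2√2/(1 - α^{n+1}) and r(p_0,p_n) = n - 1 - √2 + 2√2/(1 + α^{n+1}), one has r(p_0,q_n) - r(p_0,p_n) = 4α^n(3√2 - 4)/(1 - α^{2n+2}), and in particular r(p_0,q_n) > r(p_0,p_n). -/
import Mathlib


theorem stmt_8 (α : ℝ) (hα : α = 3 - 2 * Real.sqrt 2) (n : ℕ) (hn : 1 ≤ n)
    (rq rp : ℝ)
    (hq : rq = (n : ℝ) - 1 - Real.sqrt 2 + 2 * Real.sqrt 2 / (1 - α ^ (n + 1)))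
    (hp : rp = (n : ℝ) - 1 - Real.sqrt 2 + 2 * Real.sqrt 2 / (1 + α ^ (n + 1))) :
    rq - rp = 4 * α ^ n * (3 * Real.sqrt 2 - 4) / (1 - α ^ (2 * n + 2)) ∧ rq > rp := by
  have hs2 : Real.sqrt 2 ^ 2 = 2 := Real.sq_sqrt (by norm_num)
  have hs0 : 0 ≤ Real.sqrt 2 := Real.sqrt_nonneg 2
  have hs43 : 4 / 3 < Real.sqrt 2 := by nlinarith
  have hs15 : Real.sqrt 2 < 3 / 2 := by nlinarith
  have hα0 : 0 < α := by rw [hα]; nlinarith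
  have hα1 : α < 1 := by rw [hα]; nlinarith
  have hx0 : 0 < α ^ (n + 1) := pow_pos hα0 _
  have hx1 : α ^ (n + 1) < 1 := pow_lt_one₀ hα0.le hα1 (by omega)
  have hxn : 0 < α ^ n := pow_pos hα0 _
  have h2 : α ^ (2 * n + 2) = (α ^ (n + 1)) ^ 2 := by ring
  have hne1 : (1 : ℝ) - α ^ (n + 1) ≠ 0 := by linarith
  have hne2 : (1 : ℝ) + α ^ (n + 1) ≠ 0 := by positivity
  have hden : 0 < 1 - α ^ (2 * n + 2) := by rw [h2]; nlinarith
  have hsa : 3 * Real.sqrt 2 - 4 = Real.sqrt 2 * α := by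
    rw [hα]; linear_combination 2 * hs2
  have key : rq - rp = 4 * α ^ n * (3 * Real.sqrt 2 - 4) / (1 - α ^ (2 * n + 2)) := by
    rw [hq, hp, hsa]
    field_simp
    ring
  refine ⟨key, ?_⟩
  have hpos : 0 < 4 * α ^ n * (3 * Real.sqrt 2 - 4) / (1 - α ^ (2 * n + 2)) := by
    apply div_pos _ hden
    have : 0 < 3 * Real.sqrt 2 - 4 := by linarith
    positivity
  linarith [key]
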